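/- Let p be an odd prime, m a positive integer with gcd(m−1,p−1)=1, SQ the nonzero squares in F_p, S(i,j)=∑_{c∈F_p^*} η(c)ξ_p^{c^{1−m}j−ci}, and g the quadratic Gauss sum. Then ∑_{i∈SQ} S(i,j) = ((p−1)/2)·η(−1)·g if j=0, and ∑_{i∈SQ} S(i,j) = ((−η(−1)−η(j))/2)·g if j≠0. -/
import Mathlib


/-- `ξ_p^y` for `y : ZMod p`, where `ξ_p = exp(2πi/p)`. -/
noncomputable def xi (p : ℕ) (y : ZMod p) : ℂ :=
  Complex.exp (2 * Real.pi * Complex.I * y.val / p)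

/-- The quadratic Gauss sum `g = ∑_{y ∈ F_p^*} η(y) ξ_p^y`. -/
noncomputable def gaussSum' (p : ℕ) [Fact p.Prime] : ℂ :=
  ∑ y ∈ Finset.univ.filter (fun y : ZMod p => y ≠ 0),
    (quadraticChar (ZMod p) y : ℂ) * xi p y

section Helpers

lemma xi_eq (p : ℕ) [Fact p.Prime] (y : ZMod p) : xi p y = ZMod.stdAddChar y := by
  rw [ZMod.stdAddChar_apply, ZMod.toCircle_apply, xi]

noncomputable def chiC (p : ℕ) [Fact p.Prime] : MulChar (ZMod p) ℂ :=
  (quadraticChar (ZMod p)).ringHomComp (Int.castRingHom ℂ)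

lemma chiC_apply (p : ℕ) [Fact p.Prime] (a : ZMod p) :
    chiC p a = (quadraticChar (ZMod p) a : ℂ) := rfl

variable (p : ℕ) [Fact p.Prime]

lemma hringchar (hp : p ≠ 2) : ringChar (ZMod p) ≠ 2 := by
  rw [ZMod.ringChar_zmod_n]; exact hp

-- gaussSum' as mathlib gaussSum
lemma gauss_eq : gaussSum (chiC p) ZMod.stdAddChar = gaussSum' p := by
  rw [gaussSum, gaussSum', eq_comm]
  rw [Finset.sum_filter]
  refine Finset.sum_congr rfl fun y _ => ?_
  by_cases hy : y = 0
  · simp [hy, chiC_apply]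
  · simp [hy, chiC_apply, xi_eq]

lemma sumA (c : ZMod p) (hc : c ≠ 0) :
    ∑ i ∈ Finset.univ.filter (fun i : ZMod p => i ≠ 0), (ZMod.stdAddChar (c * i) : ℂ) = -1 := by
  have h : ∑ i : ZMod p, (ZMod.stdAddChar (c * i) : ℂ) = 0 := by
    simpa [AddChar.mulShift_apply] using
      AddChar.sum_eq_zero_of_ne_one (ZMod.isPrimitive_stdAddChar p hc)
  have hsplit := Finset.sum_filter_add_sum_filter_not Finset.univ (fun i : ZMod p => i ≠ 0)
    (fun i => (ZMod.stdAddChar (c * i) : ℂ))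
  have h0 : Finset.univ.filter (fun i : ZMod p => ¬ i ≠ 0) = {0} := by
    ext x; simp
  rw [h0] at hsplit
  simp only [Finset.sum_singleton, mul_zero, AddChar.map_zero_eq_one] at hsplit
  rw [← hsplit] at h
  linear_combination h

lemma chi_mul_self (c : ZMod p) (hc : c ≠ 0) : chiC p c * chiC p c = 1 := by
  rw [chiC_apply, ← Int.cast_mul, ← pow_two, quadraticChar_sq_one hc, Int.cast_one]

lemma sumB (c : ZMod p) (hc : c ≠ 0) :
    ∑ i ∈ Finset.univ.filter (fun i : ZMod p => i ≠ 0),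
      chiC p i * (ZMod.stdAddChar (c * i) : ℂ) = chiC p c * gaussSum' p := by
  have key := gaussSum_mulShift (chiC p) (ZMod.stdAddChar (N := p)) (Units.mk0 c hc)
  have hms : gaussSum (chiC p) (AddChar.mulShift ZMod.stdAddChar ((Units.mk0 c hc : (ZMod p)ˣ) : ZMod p))
      = ∑ i : ZMod p, chiC p i * ZMod.stdAddChar (c * i) := by
    simp [gaussSum, AddChar.mulShift_apply]
  have huniv : ∑ i : ZMod p, chiC p i * (ZMod.stdAddChar (c * i) : ℂ)
      = ∑ i ∈ Finset.univ.filter (fun i : ZMod p => i ≠ 0),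
          chiC p i * (ZMod.stdAddChar (c * i) : ℂ) := by
    rw [eq_comm, Finset.sum_filter]
    refine Finset.sum_congr rfl fun i _ => ?_
    by_cases hi : i = 0 <;> simp [hi, chiC_apply]
  rw [hms, huniv, Units.val_mk0, gauss_eq] at key
  calc ∑ i ∈ Finset.univ.filter (fun i : ZMod p => i ≠ 0), chiC p i * (ZMod.stdAddChar (c * i) : ℂ)
      = (chiC p c * chiC p c) * ∑ i ∈ Finset.univ.filter (fun i : ZMod p => i ≠ 0),
          chiC p i * (ZMod.stdAddChar (c * i) : ℂ) := by rw [chi_mul_self p c hc, one_mul]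
    _ = chiC p c * gaussSum' p := by rw [mul_assoc, key]

lemma sumC (hp : p ≠ 2) (c : ZMod p) (hc : c ≠ 0) :
    ∑ i ∈ Finset.univ.filter (fun i : ZMod p => quadraticChar (ZMod p) i = 1),
      (ZMod.stdAddChar (c * i) : ℂ)
    = (-1 + chiC p c * gaussSum' p) / 2 := by
  have hfilt : Finset.univ.filter (fun i : ZMod p => quadraticChar (ZMod p) i = 1)
      = (Finset.univ.filter (fun i : ZMod p => i ≠ 0)).filter
          (fun i => quadraticChar (ZMod p) i = 1) := by
    rw [Finset.filter_filter]
    ext i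
    simp only [Finset.mem_filter, Finset.mem_univ, true_and]
    constructor
    · intro h
      refine ⟨fun h0 => ?_, h⟩
      rw [h0] at h; simp at h
    · exact fun h => h.2
  have hsplit := Finset.sum_filter_add_sum_filter_not
    (Finset.univ.filter (fun i : ZMod p => i ≠ 0))
    (fun i => quadraticChar (ZMod p) i = 1)
    (fun i => (1 + chiC p i) * (ZMod.stdAddChar (c * i) : ℂ))
  have hP : ∑ i ∈ (Finset.univ.filter (fun i : ZMod p => i ≠ 0)).filter
        (fun i => quadraticChar (ZMod p) i = 1),
      (1 + chiC p i) * (ZMod.stdAddChar (c * i) : ℂ)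
      = 2 * ∑ i ∈ Finset.univ.filter (fun i : ZMod p => quadraticChar (ZMod p) i = 1),
          (ZMod.stdAddChar (c * i) : ℂ) := by
    rw [← hfilt, Finset.mul_sum]
    refine Finset.sum_congr rfl fun i hi => ?_
    rw [Finset.mem_filter] at hi
    rw [chiC_apply, hi.2]
    norm_num
  have hnP : ∑ i ∈ (Finset.univ.filter (fun i : ZMod p => i ≠ 0)).filter
        (fun i => ¬ quadraticChar (ZMod p) i = 1),
      (1 + chiC p i) * (ZMod.stdAddChar (c * i) : ℂ) = 0 := by
    refine Finset.sum_eq_zero fun i hi => ?_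
    simp only [Finset.mem_filter, Finset.mem_univ, true_and] at hi
    have := quadraticChar_dichotomy hi.1
    rcases this with h | h
    · exact absurd h hi.2
    · rw [chiC_apply, h]; norm_num
  have htot : ∑ i ∈ Finset.univ.filter (fun i : ZMod p => i ≠ 0),
      (1 + chiC p i) * (ZMod.stdAddChar (c * i) : ℂ) = -1 + chiC p c * gaussSum' p := by
    have : ∀ i : ZMod p, (1 + chiC p i) * (ZMod.stdAddChar (c * i) : ℂ)
        = (ZMod.stdAddChar (c * i) : ℂ) + chiC p i * (ZMod.stdAddChar (c * i) : ℂ) := by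
      intro i; ring
    rw [Finset.sum_congr rfl fun i _ => this i, Finset.sum_add_distrib,
      sumA p c hc, sumB p c hc]
  rw [hP, hnP, htot] at hsplit
  rw [eq_div_iff (by norm_num : (2:ℂ) ≠ 0)]
  linear_combination hsplit

lemma sumA0 (c : ZMod p) (hc : c ≠ 0) :
    ∑ i : ZMod p, (ZMod.stdAddChar (c * i) : ℂ) = 0 := by
  simpa [AddChar.mulShift_apply] using
    AddChar.sum_eq_zero_of_ne_one (ZMod.isPrimitive_stdAddChar p hc)

lemma chi_sum_zero (hp : p ≠ 2) : ∑ a : ZMod p, chiC p a = 0 := by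
  have h := quadraticChar_sum_zero (hringchar p hp)
  calc ∑ a : ZMod p, chiC p a
      = ((∑ a : ZMod p, quadraticChar (ZMod p) a : ℤ) : ℂ) := by push_cast; rfl
    _ = 0 := by rw [h]; norm_num

lemma chi_sigma (k : ℕ) (hk0 : k ≠ 0) (hkodd : Odd k) (c : ZMod p) :
    chiC p ((c ^ k)⁻¹) = chiC p c := by
  by_cases hc : c = 0
  · rw [hc, zero_pow hk0, inv_zero]
  · have hck : c ^ k ≠ 0 := pow_ne_zero k hc
    rw [chiC_apply, chiC_apply]
    congr 1
    have h1 : (c ^ k)⁻¹ = c ^ k * ((c ^ k)⁻¹) ^ 2 := by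
      rw [sq, ← mul_assoc, mul_inv_cancel₀ hck, one_mul]
    calc quadraticChar (ZMod p) ((c ^ k)⁻¹)
        = quadraticChar (ZMod p) (c ^ k) * quadraticChar (ZMod p) (((c ^ k)⁻¹) ^ 2) := by
          conv_lhs => rw [h1]
          rw [map_mul]
      _ = quadraticChar (ZMod p) c ^ k := by
          rw [quadraticChar_sq_one' (inv_ne_zero hck), mul_one, map_pow]
      _ = quadraticChar (ZMod p) c := by
          rcases quadraticChar_dichotomy hc with h | h <;> rw [h]
          · exact one_pow k
          · exact hkodd.neg_one_pow

lemma sigma_inj (k : ℕ) (hk0 : k ≠ 0) (hcop : Nat.gcd k (p - 1) = 1) :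
    Function.Injective (fun c : ZMod p => (c ^ k)⁻¹) := by
  have hcop' : (Nat.card (ZMod p)ˣ).Coprime k := by
    rw [Nat.card_eq_fintype_card, ZMod.card_units p]
    exact Nat.coprime_comm.mp hcop
  have hpowinj : Function.Injective (fun u : (ZMod p)ˣ => u ^ k) :=
    hcop'.pow_left_bijective.injective
  intro a b hab
  simp only at hab
  have h1 : a ^ k = b ^ k := inv_injective hab
  by_cases ha : a = 0
  · have hbk : b ^ k = 0 := by rw [← h1, ha, zero_pow hk0]
    rw [ha, (pow_eq_zero_iff hk0).mp hbk]
  · have hb : b ≠ 0 := by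
      intro h
      rw [h, zero_pow hk0] at h1
      exact ha ((pow_eq_zero_iff hk0).mp h1)
    have hu : (Units.mk0 a ha) ^ k = (Units.mk0 b hb) ^ k := by
      ext
      simpa using h1
    simpa using congrArg Units.val (hpowinj hu)


end Helpers

/-- `S^{(m)}(i,j) = ∑_{c ∈ F_p^*} η(c) ξ_p^{c^{1-m} j - c i}`. -/
noncomputable def Sm (p : ℕ) [Fact p.Prime] (m : ℕ) (i j : ZMod p) : ℂ :=
  ∑ c ∈ Finset.univ.filter (fun c : ZMod p => c ≠ 0),
    (quadraticChar (ZMod p) c : ℂ) * xi p (c ^ ((1 : ℤ) - m) * j - c * i)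

theorem sum_Sm_over_squares (p : ℕ) [Fact p.Prime] (hp : p ≠ 2)
    (m : ℕ) (hm : 1 ≤ m) (hgcd : Nat.gcd (m - 1) (p - 1) = 1) (j : ZMod p) :
    ∑ i ∈ Finset.univ.filter (fun i : ZMod p => quadraticChar (ZMod p) i = 1),
        Sm p m i j
      = if j = 0 then
          (((p : ℂ) - 1) / 2) * (quadraticChar (ZMod p) (-1) : ℂ) * gaussSum' p
        else
          ((-(quadraticChar (ZMod p) (-1) : ℂ) - (quadraticChar (ZMod p) j : ℂ)) / 2)
            * gaussSum' p := by
  have hp3 : 3 ≤ p := by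
    have := (Fact.out : p.Prime).two_le
    omega
  set k := m - 1 with hkdef
  have hk0 : k ≠ 0 := by
    intro h
    rw [h, Nat.gcd_zero_left] at hgcd
    omega
  have hkodd : Odd k := by
    rcases Nat.even_or_odd k with he | ho
    · exfalso
      have hpe : Even (p - 1) := by
        have := (Fact.out : p.Prime).two_le
        have hodd : Odd p := (Fact.out : p.Prime).odd_of_ne_two hp
        obtain ⟨t, ht⟩ := hodd
        exact ⟨t, by omega⟩
      have h2 : 2 ∣ Nat.gcd k (p - 1) := Nat.dvd_gcd he.two_dvd hpe.two_dvd
      rw [hgcd] at h2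
      omega
    · exact ho
  -- σ : c ↦ (c^k)⁻¹
  have hbij : Function.Bijective (fun c : ZMod p => (c ^ k)⁻¹) :=
    Finite.injective_iff_bijective.mp (sigma_inj p k hk0 hgcd)
  have hzpow : ∀ c : ZMod p, c ^ ((1 : ℤ) - m) = (c ^ k)⁻¹ := by
    intro c
    have he : (1 : ℤ) - m = -(k : ℤ) := by
      have : (k : ℤ) = (m : ℤ) - 1 := by
        rw [hkdef]; push_cast [Nat.cast_sub hm]; ring
      omega
    rw [he, zpow_neg, zpow_natCast]
  -- notation
  set ψ : AddChar (ZMod p) ℂ := ZMod.stdAddChar with hψ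
  set G := gaussSum' p with hG
  set N := Finset.univ.filter (fun c : ZMod p => c ≠ 0) with hN
  set SQ := Finset.univ.filter (fun i : ZMod p => quadraticChar (ZMod p) i = 1) with hSQ
  -- rewrite Sm
  have hSm : ∀ i : ZMod p, Sm p m i j
      = ∑ c ∈ N, chiC p c * ψ ((c ^ k)⁻¹ * j) * ψ (-(c * i)) := by
    intro i
    rw [Sm]
    refine Finset.sum_congr rfl fun c _ => ?_
    rw [xi_eq, hzpow c, sub_eq_add_neg, AddChar.map_add_eq_mul, ← chiC_apply]
    ring
  have hinner : ∀ c ∈ N, ∑ i ∈ SQ, chiC p c * ψ ((c ^ k)⁻¹ * j) * ψ (-(c * i))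
      = -(1/2) * (chiC p c * ψ ((c ^ k)⁻¹ * j))
        + (chiC p (-1) * G / 2) * ψ ((c ^ k)⁻¹ * j) := by
    intro c hc
    rw [hN, Finset.mem_filter] at hc
    have hnc : (-c : ZMod p) ≠ 0 := neg_ne_zero.mpr hc.2
    have hC := sumC p hp (-c) hnc
    have hstep : ∑ i ∈ SQ, chiC p c * ψ ((c ^ k)⁻¹ * j) * ψ (-(c * i))
        = chiC p c * ψ ((c ^ k)⁻¹ * j) * ((-1 + chiC p (-c) * G) / 2) := by
      calc ∑ i ∈ SQ, chiC p c * ψ ((c ^ k)⁻¹ * j) * ψ (-(c * i))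
          = chiC p c * ψ ((c ^ k)⁻¹ * j) * ∑ i ∈ SQ, ψ (-c * i) := by
            rw [Finset.mul_sum]
            exact Finset.sum_congr rfl fun i _ => by rw [neg_mul]
        _ = chiC p c * ψ ((c ^ k)⁻¹ * j) * ((-1 + chiC p (-c) * G) / 2) := by
            rw [hSQ, hψ, hC, hG]
    rw [hstep]
    have hmc : chiC p (-c) = chiC p (-1) * chiC p c := by
      rw [← map_mul]; norm_num
    rw [hmc]
    linear_combination (ψ ((c ^ k)⁻¹ * j) * chiC p (-1) * G / 2) * chi_mul_self p c hc.2
  rw [Finset.sum_congr rfl (fun i _ => hSm i), Finset.sum_comm,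
    Finset.sum_congr rfl hinner, Finset.sum_add_distrib, ← Finset.mul_sum, ← Finset.mul_sum]
  set A := ∑ c ∈ N, chiC p c * ψ ((c ^ k)⁻¹ * j) with hA
  set B := ∑ c ∈ N, ψ ((c ^ k)⁻¹ * j) with hB
  -- extend to univ and reindex
  have hAuniv : A = ∑ c : ZMod p, chiC p c * ψ ((c ^ k)⁻¹ * j) := by
    rw [hA, hN, eq_comm, Finset.sum_filter]
    refine Finset.sum_congr rfl fun c _ => ?_
    by_cases hc : c = 0 <;> simp [hc, chiC_apply]
  have hArw : A = ∑ d : ZMod p, chiC p d * ψ (d * j) := by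
    rw [hAuniv]
    calc ∑ c : ZMod p, chiC p c * ψ ((c ^ k)⁻¹ * j)
        = ∑ c : ZMod p, chiC p ((c ^ k)⁻¹) * ψ ((c ^ k)⁻¹ * j) := by
          refine Finset.sum_congr rfl fun c _ => ?_
          rw [chi_sigma p k hk0 hkodd c]
      _ = ∑ d : ZMod p, chiC p d * ψ (d * j) :=
          Fintype.sum_bijective _ hbij _ _ (fun c => rfl)
  have hBuniv : B + 1 = ∑ c : ZMod p, ψ ((c ^ k)⁻¹ * j) := by
    have hsplit := Finset.sum_filter_add_sum_filter_not Finset.univ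
      (fun c : ZMod p => c ≠ 0) (fun c => (ψ ((c ^ k)⁻¹ * j) : ℂ))
    have h0 : Finset.univ.filter (fun c : ZMod p => ¬ c ≠ 0) = {0} := by ext x; simp
    rw [h0] at hsplit
    simp only [Finset.sum_singleton, zero_pow hk0, inv_zero, zero_mul,
      AddChar.map_zero_eq_one] at hsplit
    rw [← hsplit, hB, hN]
  have hBrw : B + 1 = ∑ d : ZMod p, ψ (d * j) := by
    rw [hBuniv]
    exact Fintype.sum_bijective _ hbij _ _ (fun c => rfl)
  by_cases hj : j = 0
  · rw [if_pos hj]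
    have hA0 : A = 0 := by
      rw [hArw, hj]
      simp only [mul_zero, AddChar.map_zero_eq_one, mul_one]
      exact chi_sum_zero p hp
    have hB0 : B = (p : ℂ) - 1 := by
      have : B + 1 = (p : ℂ) := by
        rw [hBrw, hj]
        simp [Finset.card_univ, ZMod.card]
      linear_combination this
    rw [hA0, hB0, ← chiC_apply]
    ring
  · rw [if_neg hj]
    have hA1 : A = chiC p j * G := by
      rw [hArw]
      have : ∑ d : ZMod p, chiC p d * ψ (d * j)
          = ∑ d ∈ N, chiC p d * ψ (j * d) := by
        rw [hN, Finset.sum_filter]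
        refine Finset.sum_congr rfl fun d _ => ?_
        by_cases hd : d = 0 <;> simp [hd, chiC_apply, mul_comm]
      rw [this, hG]
      exact sumB p j hj
    have hB1 : B = -1 := by
      have h0 : ∑ d : ZMod p, (ψ (d * j) : ℂ) = 0 := by
        rw [show (fun d : ZMod p => ψ (d * j)) = (fun d : ZMod p => ψ (j * d)) from
          funext fun d => by rw [mul_comm]]
        exact sumA0 p j hj
      have := hBrw
      rw [h0] at this
      linear_combination this
    rw [hA1, hB1, ← chiC_apply, ← chiC_apply]
    ring
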